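/- Let c ≥ 2 and d, n ≥ 1. Fix X ∈ ℝ^{d×n}, γ, β ∈ ℝ^c, and C ∈ ℝ^{c×n}. For W ∈ ℝ^{c×d} and b ∈ ℝ^c set Z = WX + b·1ₙᵀ ∈ ℝ^{c×n}, and let Ẑ ∈ ℝ^{c×n} be the matrix whose j-th column is N(Zⱼ), the z-score normalization of the j-th column Zⱼ ∈ ℝ^c (with the mean and standard deviation taken over the c entries of the column). Suppose at (W₀, b₀) every column Zⱼ of Z₀ = W₀X + b₀·1ₙᵀ satisfies σ(Zⱼ) > 0. Define L(W, b) = ‖(γ·1ₙᵀ) ⊙ Ẑ + β·1ₙᵀ + C‖_F². Then L is differentiable at (W₀, b₀), and its partial gradients are ∇_W L = Δ₃·Xᵀ and ∇_b L = Δ₃·1ₙ, where Δ₁ = (γ·1ₙᵀ) ⊙ Ẑ + β·1ₙᵀ + C, Δ₂ = 2(γ·1ₙᵀ) ⊙ Δ₁, and the j-th column of Δ₃ is (1/σ(Zⱼ))·(Δ₂,ⱼ − (1/c)(1_cᵀΔ₂,ⱼ)·1_c − (1/c)(ẑⱼᵀΔ₂,ⱼ)·ẑⱼ), with ẑⱼ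 the j-th column of Ẑ (all matrices evaluated at (W₀, b₀)). -/

import Mathlib

/-- Mean of a vector. -/
noncomputable def zmean {c : ℕ} (z : EuclideanSpace ℝ (Fin c)) : ℝ :=
  (1 / (c : ℝ)) * ∑ i, z i

/-- Standard deviation of a vector. -/
noncomputable def zstd {c : ℕ} (z : EuclideanSpace ℝ (Fin c)) : ℝ :=
  Real.sqrt ((1 / (c : ℝ)) * ∑ i, (z i - zmean z) ^ 2)

/-- Z-score normalization `N(z) = (z − μ(z)·1)/σ(z)`. -/
noncomputable def znorm {c : ℕ} (z : EuclideanSpace ℝ (Fin c)) :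
    EuclideanSpace ℝ (Fin c) :=
  WithLp.toLp 2 (fun i => (z i - zmean z) / zstd z)

lemma key {c : ℕ} (hc : (c:ℝ) ≠ 0) (σ : ℝ) (hσ : σ ≠ 0) (w v D : Fin c → ℝ)
    (hw : ∑ i, w i = 0) :
    ∑ x, D x * (w x * (-(σ ^ 2)⁻¹ * (1 / (2 * σ) *
          (1 / (c : ℝ) * ∑ k, 2 * w k * (v k - 1 / (c : ℝ) * ∑ l, v l))))
        + σ⁻¹ * (v x - 1 / (c : ℝ) * ∑ k, v k))
      = ∑ x, σ⁻¹ * (D x - 1 / (c : ℝ) * ∑ k, D k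
          - (1 / (c : ℝ) * ∑ k, w k * σ⁻¹ * D k) * (w x * σ⁻¹)) * v x := by
  have hS2 : ∑ k, 2 * w k * (v k - 1 / (c : ℝ) * ∑ l, v l)
      = 2 * ∑ k, w k * v k := by
    calc ∑ k, 2 * w k * (v k - 1 / (c : ℝ) * ∑ l, v l)
        = ∑ k, (2 * (w k * v k) - (2 * (1 / (c : ℝ) * ∑ l, v l)) * w k) :=
          Finset.sum_congr rfl fun k _ => by ring
      _ = 2 * ∑ k, w k * v k - (2 * (1 / (c : ℝ) * ∑ l, v l)) * ∑ k, w k := by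
          rw [Finset.sum_sub_distrib, ← Finset.mul_sum, ← Finset.mul_sum]
      _ = 2 * ∑ k, w k * v k := by rw [hw]; ring
  have hTz : ∑ k, w k * σ⁻¹ * D k = σ⁻¹ * ∑ k, D k * w k := by
    rw [Finset.mul_sum]; exact Finset.sum_congr rfl fun k _ => by ring
  rw [hS2, hTz]
  have hK : -(σ ^ 2)⁻¹ * (1 / (2 * σ) * (1 / (c : ℝ) * (2 * ∑ k, w k * v k)))
      = -((σ ^ 2)⁻¹ * σ⁻¹ * (1 / (c : ℝ)) * ∑ k, w k * v k) := by
    field_simp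
  rw [hK]
  calc ∑ x, D x * (w x * -((σ ^ 2)⁻¹ * σ⁻¹ * (1 / (c : ℝ)) * ∑ k, w k * v k)
        + σ⁻¹ * (v x - 1 / (c : ℝ) * ∑ k, v k))
      = ∑ x, (σ⁻¹ * (D x * v x)
          - (σ⁻¹ * (1 / (c : ℝ)) * ∑ k, v k) * D x
          - ((σ ^ 2)⁻¹ * σ⁻¹ * (1 / (c : ℝ)) * ∑ k, w k * v k) * (D x * w x)) :=
        Finset.sum_congr rfl fun x _ => by ring
    _ = σ⁻¹ * ∑ x, D x * v x
          - (σ⁻¹ * (1 / (c : ℝ)) * ∑ k, v k) * ∑ x, D x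
          - ((σ ^ 2)⁻¹ * σ⁻¹ * (1 / (c : ℝ)) * ∑ k, w k * v k) * ∑ x, D x * w x := by
        rw [Finset.sum_sub_distrib, Finset.sum_sub_distrib, ← Finset.mul_sum,
          ← Finset.mul_sum, ← Finset.mul_sum]
    _ = ∑ x, (σ⁻¹ * (D x * v x)
          - (σ⁻¹ * (1 / (c : ℝ)) * ∑ k, D k) * v x
          - (σ⁻¹ * (1 / (c : ℝ)) * (σ⁻¹ * ∑ k, D k * w k) * σ⁻¹) * (w x * v x))
            := by
        rw [Finset.sum_sub_distrib, Finset.sum_sub_distrib, ← Finset.mul_sum,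
          ← Finset.mul_sum, ← Finset.mul_sum]
        ring
    _ = ∑ x, σ⁻¹ * (D x - 1 / (c : ℝ) * ∑ k, D k
          - (1 / (c : ℝ) * (σ⁻¹ * ∑ k, D k * w k)) * (w x * σ⁻¹)) * v x :=
        Finset.sum_congr rfl fun x _ => by ring


open InnerProductSpace in
lemma core {c : ℕ} (hc : (c:ℝ) ≠ 0) (γ β Cj : Fin c → ℝ)
    (z₀ : EuclideanSpace ℝ (Fin c)) (hσ : 0 < zstd z₀) :
    HasFDerivAt
      (fun z : EuclideanSpace ℝ (Fin c) => ∑ i, (γ i * znorm z i + β i + Cj i) ^ 2)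
      (toDual ℝ (EuclideanSpace ℝ (Fin c)) (WithLp.toLp 2 (fun i => (zstd z₀)⁻¹ *
        ((2 * γ i * (γ i * znorm z₀ i + β i + Cj i))
          - (1/(c:ℝ)) * (∑ i', 2 * γ i' * (γ i' * znorm z₀ i' + β i' + Cj i'))
          - (1/(c:ℝ)) * (∑ i', znorm z₀ i' * (2 * γ i' * (γ i' * znorm z₀ i' + β i' + Cj i')))
              * znorm z₀ i)) : EuclideanSpace ℝ (Fin c))) z₀ := by
  have hZ : ∀ i, HasFDerivAt (fun z : EuclideanSpace ℝ (Fin c) => z i)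
      (EuclideanSpace.proj (𝕜 := ℝ) i) z₀ := fun i => by
    exact (EuclideanSpace.proj (𝕜 := ℝ) i).hasFDerivAt
  have hμ : HasFDerivAt (fun z : EuclideanSpace ℝ (Fin c) => zmean z)
      ((1/(c:ℝ)) • ∑ i : Fin c, (EuclideanSpace.proj (𝕜 := ℝ) i)) z₀ :=
    (HasFDerivAt.fun_sum (fun i _ => hZ i)).const_mul (1/(c:ℝ))
  set Lμ := ((1/(c:ℝ)) • ∑ i : Fin c, (EuclideanSpace.proj (𝕜 := ℝ) i)) with hLμ
  have hv : HasFDerivAt (fun z : EuclideanSpace ℝ (Fin c) =>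
        (1/(c:ℝ)) * ∑ i, (z i - zmean z) ^ 2)
      ((1/(c:ℝ)) • ∑ i : Fin c, ((2:ℝ) * (z₀ i - zmean z₀) ^ 1) •
          (EuclideanSpace.proj (𝕜 := ℝ) i - Lμ)) z₀ :=
    (HasFDerivAt.fun_sum (fun i _ =>
      (hasDerivAt_pow 2 (z₀ i - zmean z₀)).comp_hasFDerivAt z₀ ((hZ i).sub hμ))).const_mul _
  set Lv := ((1/(c:ℝ)) • ∑ i : Fin c, ((2:ℝ) * (z₀ i - zmean z₀) ^ 1) •
      (EuclideanSpace.proj (𝕜 := ℝ) i - Lμ)) with hLv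
  have hvpos : 0 < (1/(c:ℝ)) * ∑ i, (z₀ i - zmean z₀) ^ 2 := Real.sqrt_pos.1 hσ
  have hstd : HasFDerivAt (fun z : EuclideanSpace ℝ (Fin c) => zstd z)
      ((1 / (2 * zstd z₀)) • Lv) z₀ := hv.sqrt (ne_of_gt hvpos)
  set Lσ := ((1 / (2 * zstd z₀)) • Lv) with hLσ
  have hinv : HasFDerivAt (fun z : EuclideanSpace ℝ (Fin c) => (zstd z)⁻¹)
      ((-(zstd z₀ ^ 2)⁻¹) • Lσ) z₀ :=
    (hasDerivAt_inv (ne_of_gt hσ)).comp_hasFDerivAt z₀ hstd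
  set Li := ((-(zstd z₀ ^ 2)⁻¹) • Lσ) with hLi
  have hN : ∀ i, HasFDerivAt (fun z : EuclideanSpace ℝ (Fin c) =>
        (z i - zmean z) * (zstd z)⁻¹)
      ((z₀ i - zmean z₀) • Li + (zstd z₀)⁻¹ • (EuclideanSpace.proj (𝕜 := ℝ) i - Lμ)) z₀ :=
    fun i => ((hZ i).sub hμ).mul hinv
  have hφ : HasFDerivAt (fun z : EuclideanSpace ℝ (Fin c) =>
        ∑ i, (γ i * ((z i - zmean z) * (zstd z)⁻¹) + β i + Cj i) ^ 2)
      (∑ i : Fin c, ((2:ℝ) * (γ i * ((z₀ i - zmean z₀) * (zstd z₀)⁻¹) + β i + Cj i) ^ 1) •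
        (γ i • ((z₀ i - zmean z₀) • Li + (zstd z₀)⁻¹ • (EuclideanSpace.proj (𝕜 := ℝ) i - Lμ)))) z₀ :=
    HasFDerivAt.fun_sum (fun i _ =>
      (hasDerivAt_pow 2 _).comp_hasFDerivAt z₀ ((((hN i).const_mul (γ i)).add_const (β i)).add_const (Cj i)))
  have hfun : (fun z : EuclideanSpace ℝ (Fin c) => ∑ i, (γ i * znorm z i + β i + Cj i) ^ 2)
      = (fun z : EuclideanSpace ℝ (Fin c) =>
        ∑ i, (γ i * ((z i - zmean z) * (zstd z)⁻¹) + β i + Cj i) ^ 2) := by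
    funext z; simp only [znorm, div_eq_mul_inv]
  rw [hfun]
  refine hφ.congr_fderiv ?_
  apply ContinuousLinearMap.ext
  intro v
  simp only [hLi, hLσ, hLv, hLμ, ContinuousLinearMap.sum_apply, ContinuousLinearMap.smul_apply,
    ContinuousLinearMap.add_apply, ContinuousLinearMap.sub_apply, ContinuousLinearMap.coe_sum',
    Finset.sum_apply, PiLp.proj_apply, smul_eq_mul, toDual_apply_apply, PiLp.inner_apply,
    RCLike.inner_apply, starRingEnd_apply, star_trivial, pow_one]
  have hw : ∑ i, (z₀ i - zmean z₀) = 0 := by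
    rw [Finset.sum_sub_distrib, Finset.sum_const, Finset.card_univ, Fintype.card_fin,
      nsmul_eq_mul, zmean]
    field_simp
    ring
  simp only [znorm, div_eq_mul_inv]
  calc (∑ x : Fin c,
      2 * (γ x * ((z₀ x - zmean z₀) * (zstd z₀)⁻¹) + β x + Cj x) *
        (γ x *
          ((z₀ x - zmean z₀) *
              (-(zstd z₀ ^ 2)⁻¹ *
                (1 / (2 * zstd z₀) *
                  (1 / (c:ℝ) * ∑ k : Fin c, 2 * (z₀ k - zmean z₀) * (v k - 1 / (c:ℝ) * ∑ l : Fin c, v l)))) +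
            (zstd z₀)⁻¹ * (v x - 1 / (c:ℝ) * ∑ k : Fin c, v k))))
      = ∑ x : Fin c,
          (2 * γ x * (γ x * ((z₀ x - zmean z₀) * (zstd z₀)⁻¹) + β x + Cj x)) *
          ((z₀ x - zmean z₀) * (-(zstd z₀ ^ 2)⁻¹ * (1 / (2 * zstd z₀) *
              (1 / (c:ℝ) * ∑ k : Fin c, 2 * (z₀ k - zmean z₀) * (v k - 1 / (c:ℝ) * ∑ l : Fin c, v l))))
            + (zstd z₀)⁻¹ * (v x - 1 / (c:ℝ) * ∑ k : Fin c, v k)) :=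
        Finset.sum_congr rfl fun x _ => by ring
    _ = _ := (key hc (zstd z₀) (ne_of_gt hσ) (fun i => z₀ i - zmean z₀) v
        (fun i => 2 * γ i * (γ i * ((z₀ i - zmean z₀) * (zstd z₀)⁻¹) + β i + Cj i)) hw).trans
          (Finset.sum_congr rfl fun x _ => mul_comm _ _)
/-- `j`-th column of `Z = WX + b·1ₙᵀ`, i.e. `(Zⱼ)ᵢ = ∑ₖ Wᵢₖ Xₖⱼ + bᵢ`. -/
noncomputable def Zcol {c d n : ℕ} (X : Matrix (Fin d) (Fin n) ℝ)
    (W : EuclideanSpace ℝ (Fin c × Fin d)) (b : EuclideanSpace ℝ (Fin c))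
    (j : Fin n) : EuclideanSpace ℝ (Fin c) :=
  WithLp.toLp 2 (fun i => (∑ k, W (i, k) * X k j) + b i)

/-- Entries of `Ẑ`: the columnwise z-score normalization of `Z`. -/
noncomputable def Zhat {c d n : ℕ} (X : Matrix (Fin d) (Fin n) ℝ)
    (W : EuclideanSpace ℝ (Fin c × Fin d)) (b : EuclideanSpace ℝ (Fin c))
    (i : Fin c) (j : Fin n) : ℝ :=
  znorm (Zcol X W b j) i

/-- `Δ₁ = (γ·1ₙᵀ) ⊙ Ẑ + β·1ₙᵀ + C`. -/
noncomputable def Delta1 {c d n : ℕ} (X : Matrix (Fin d) (Fin n) ℝ)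
    (γ β : Fin c → ℝ) (C : Matrix (Fin c) (Fin n) ℝ)
    (W : EuclideanSpace ℝ (Fin c × Fin d)) (b : EuclideanSpace ℝ (Fin c))
    (i : Fin c) (j : Fin n) : ℝ :=
  γ i * Zhat X W b i j + β i + C i j

/-- `Δ₂ = 2(γ·1ₙᵀ) ⊙ Δ₁`. -/
noncomputable def Delta2 {c d n : ℕ} (X : Matrix (Fin d) (Fin n) ℝ)
    (γ β : Fin c → ℝ) (C : Matrix (Fin c) (Fin n) ℝ)
    (W : EuclideanSpace ℝ (Fin c × Fin d)) (b : EuclideanSpace ℝ (Fin c))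
    (i : Fin c) (j : Fin n) : ℝ :=
  2 * γ i * Delta1 X γ β C W b i j

/-- `Δ₃`, whose `j`-th column is
`(1/σ(Zⱼ))·(Δ₂ⱼ − (1/c)(1ᵀΔ₂ⱼ)·1 − (1/c)(ẑⱼᵀΔ₂ⱼ)·ẑⱼ)`. -/
noncomputable def Delta3 {c d n : ℕ} (X : Matrix (Fin d) (Fin n) ℝ)
    (γ β : Fin c → ℝ) (C : Matrix (Fin c) (Fin n) ℝ)
    (W : EuclideanSpace ℝ (Fin c × Fin d)) (b : EuclideanSpace ℝ (Fin c))
    (i : Fin c) (j : Fin n) : ℝ :=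
  (zstd (Zcol X W b j))⁻¹ *
    (Delta2 X γ β C W b i j
      - (1 / (c : ℝ)) * (∑ i', Delta2 X γ β C W b i' j)
      - (1 / (c : ℝ)) * (∑ i', Zhat X W b i' j * Delta2 X γ β C W b i' j) *
          Zhat X W b i j)

noncomputable def Amap {c d n : ℕ} (X : Matrix (Fin d) (Fin n) ℝ) (j : Fin n) :
    EuclideanSpace ℝ (Fin c × Fin d) →L[ℝ] EuclideanSpace ℝ (Fin c) :=
  LinearMap.toContinuousLinearMap
    { toFun := fun W => (WithLp.toLp 2 (fun i => ∑ k, W (i, k) * X k j) : EuclideanSpace ℝ (Fin c))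
      map_add' := fun u v => by
        ext i
        simp [Finset.sum_add_distrib, add_mul]
      map_smul' := fun r u => by
        ext i
        simp [Finset.mul_sum, mul_assoc] }

lemma Amap_apply {c d n : ℕ} (X : Matrix (Fin d) (Fin n) ℝ) (j : Fin n)
    (W : EuclideanSpace ℝ (Fin c × Fin d)) (i : Fin c) :
    Amap X j W i = ∑ k, W (i, k) * X k j := rfl

/-- Gradients of the layer-norm style loss
`L(W, b) = ‖(γ·1ₙᵀ) ⊙ Ẑ + β·1ₙᵀ + C‖_F²` with `Ẑ` the columnwise z-score
normalization of `Z = WX + b·1ₙᵀ`: at a point where every column of `Z₀` has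
positive standard deviation, `L` is differentiable, `∇_W L = Δ₃·Xᵀ`, and
`∇_b L = Δ₃·1ₙ`. -/
theorem stmt_12 {c d n : ℕ} (hc : 2 ≤ c) (hd : 1 ≤ d) (hn : 1 ≤ n)
    (X : Matrix (Fin d) (Fin n) ℝ) (γ β : Fin c → ℝ)
    (C : Matrix (Fin c) (Fin n) ℝ)
    (W₀ : EuclideanSpace ℝ (Fin c × Fin d)) (b₀ : EuclideanSpace ℝ (Fin c))
    (hσ : ∀ j : Fin n, 0 < zstd (Zcol X W₀ b₀ j)) :
    DifferentiableAt ℝ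
      (fun Wb : EuclideanSpace ℝ (Fin c × Fin d) × EuclideanSpace ℝ (Fin c) =>
        ∑ i, ∑ j, (γ i * Zhat X Wb.1 Wb.2 i j + β i + C i j) ^ 2) (W₀, b₀)
    ∧ HasGradientAt
        (fun W : EuclideanSpace ℝ (Fin c × Fin d) =>
          ∑ i, ∑ j, (γ i * Zhat X W b₀ i j + β i + C i j) ^ 2)
        ((WithLp.toLp 2 (fun q => ∑ j, Delta3 X γ β C W₀ b₀ q.1 j * X q.2 j) :
          EuclideanSpace ℝ (Fin c × Fin d))) W₀
    ∧ HasGradientAt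
        (fun b : EuclideanSpace ℝ (Fin c) =>
          ∑ i, ∑ j, (γ i * Zhat X W₀ b i j + β i + C i j) ^ 2)
        ((WithLp.toLp 2 (fun i => ∑ j, Delta3 X γ β C W₀ b₀ i j) :
          EuclideanSpace ℝ (Fin c))) b₀ := by
  have hc0 : (c:ℝ) ≠ 0 := Nat.cast_ne_zero.mpr (by omega)
  have hcore : ∀ j : Fin n, HasFDerivAt
      (fun z : EuclideanSpace ℝ (Fin c) => ∑ i, (γ i * znorm z i + β i + C i j) ^ 2)
      (InnerProductSpace.toDual ℝ (EuclideanSpace ℝ (Fin c)) (WithLp.toLp 2 (fun i => Delta3 X γ β C W₀ b₀ i j) : EuclideanSpace ℝ (Fin c)))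
      (Zcol X W₀ b₀ j) :=
    fun j => core hc0 γ β (fun i => C i j) (Zcol X W₀ b₀ j) (hσ j)
  -- b-direction columnwise
  have hb : ∀ j : Fin n, HasFDerivAt
      (fun b : EuclideanSpace ℝ (Fin c) => ∑ i, (γ i * Zhat X W₀ b i j + β i + C i j) ^ 2)
      (InnerProductSpace.toDual ℝ (EuclideanSpace ℝ (Fin c)) (WithLp.toLp 2 (fun i => Delta3 X γ β C W₀ b₀ i j) : EuclideanSpace ℝ (Fin c)))
      b₀ := by
    intro j
    have hm : HasFDerivAt (fun b : EuclideanSpace ℝ (Fin c) => Zcol X W₀ b j)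
        (ContinuousLinearMap.id ℝ _) b₀ :=
      (hasFDerivAt_id b₀).const_add
        (WithLp.toLp 2 (fun i => ∑ k, W₀ (i, k) * X k j) : EuclideanSpace ℝ (Fin c))
    have := (hcore j).comp b₀ hm
    rw [ContinuousLinearMap.comp_id] at this
    exact this
  -- W-direction columnwise
  have hW : ∀ j : Fin n, HasFDerivAt
      (fun W : EuclideanSpace ℝ (Fin c × Fin d) => ∑ i, (γ i * Zhat X W b₀ i j + β i + C i j) ^ 2)
      ((InnerProductSpace.toDual ℝ (EuclideanSpace ℝ (Fin c)) (WithLp.toLp 2 (fun i => Delta3 X γ β C W₀ b₀ i j) :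
          EuclideanSpace ℝ (Fin c))).comp (Amap X j))
      W₀ := by
    intro j
    have hm : HasFDerivAt (fun W : EuclideanSpace ℝ (Fin c × Fin d) => Zcol X W b₀ j)
        (Amap X j) W₀ := (Amap X j).hasFDerivAt.add_const b₀
    exact (hcore j).comp W₀ hm
  refine ⟨?_, ?_, ?_⟩
  · -- joint differentiability
    have hfn : (fun Wb : EuclideanSpace ℝ (Fin c × Fin d) × EuclideanSpace ℝ (Fin c) =>
        ∑ i, ∑ j, (γ i * Zhat X Wb.1 Wb.2 i j + β i + C i j) ^ 2)
        = (fun Wb : EuclideanSpace ℝ (Fin c × Fin d) × EuclideanSpace ℝ (Fin c) =>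
        ∑ j, ∑ i, (γ i * Zhat X Wb.1 Wb.2 i j + β i + C i j) ^ 2) :=
      funext fun Wb => Finset.sum_comm
    rw [hfn]
    apply DifferentiableAt.fun_sum
    intro j _
    have hin : DifferentiableAt ℝ
        (fun Wb : EuclideanSpace ℝ (Fin c × Fin d) × EuclideanSpace ℝ (Fin c) =>
          Zcol X Wb.1 Wb.2 j) (W₀, b₀) := by
      have : DifferentiableAt ℝ
          (fun Wb : EuclideanSpace ℝ (Fin c × Fin d) × EuclideanSpace ℝ (Fin c) =>
            Amap X j Wb.1 + Wb.2) (W₀, b₀) :=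
        (((Amap X j).differentiableAt).comp (W₀, b₀) differentiableAt_fst).add differentiableAt_snd
      exact this
    have := ((hcore j).differentiableAt).comp (W₀, b₀) hin
    exact this
  · -- W gradient
    have hfn : (fun W : EuclideanSpace ℝ (Fin c × Fin d) =>
        ∑ i, ∑ j, (γ i * Zhat X W b₀ i j + β i + C i j) ^ 2)
        = (fun W : EuclideanSpace ℝ (Fin c × Fin d) =>
        ∑ j, ∑ i, (γ i * Zhat X W b₀ i j + β i + C i j) ^ 2) :=
      funext fun W => Finset.sum_comm
    rw [HasGradientAt, HasGradientAtFilter, hfn]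
    have hsum := HasFDerivAt.fun_sum (fun j (_ : j ∈ Finset.univ) => hW j)
    refine hsum.congr_fderiv ?_
    apply ContinuousLinearMap.ext
    intro v
    simp only [ContinuousLinearMap.sum_apply, ContinuousLinearMap.comp_apply,
      InnerProductSpace.toDual_apply_apply, PiLp.inner_apply, RCLike.inner_apply, starRingEnd_apply, star_trivial]
    simp only [Amap_apply, Finset.mul_sum, Fintype.sum_prod_type, Finset.sum_mul]
    rw [Finset.sum_comm]
    refine Finset.sum_congr rfl fun i _ => ?_
    rw [Finset.sum_comm]
    exact Finset.sum_congr rfl fun k _ => Finset.sum_congr rfl fun j _ => by ring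
  · -- b gradient
    have hfn : (fun b : EuclideanSpace ℝ (Fin c) =>
        ∑ i, ∑ j, (γ i * Zhat X W₀ b i j + β i + C i j) ^ 2)
        = (fun b : EuclideanSpace ℝ (Fin c) =>
        ∑ j, ∑ i, (γ i * Zhat X W₀ b i j + β i + C i j) ^ 2) :=
      funext fun b => Finset.sum_comm
    rw [HasGradientAt, HasGradientAtFilter, hfn]
    have hsum := HasFDerivAt.fun_sum (fun j (_ : j ∈ Finset.univ) => hb j)
    refine hsum.congr_fderiv ?_
    apply ContinuousLinearMap.ext
    intro v
    simp only [ContinuousLinearMap.sum_apply, InnerProductSpace.toDual_apply_apply, PiLp.inner_apply,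
      RCLike.inner_apply, starRingEnd_apply, star_trivial]
    rw [Finset.sum_comm]
    exact Finset.sum_congr rfl fun i _ => (Finset.mul_sum _ _ _).symm
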